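/- Let G be an additive abelian group, m, n ≥ 2, and A an m×n partial matrix over G whose underlying bipartite graph H_A is connected. If A is cycle-balanced, then the matrix C defined by choosing, for each (s,t) ∈ [m]×[n], a path (x_s = x_{i_1}, y_{j_1}, …, x_{i_k}, y_{j_k} = y_t) in H_A and setting c_{s,t} = Σ_{r=1}^{k} a_{i_r, j_r} − Σ_{r=1}^{k−1} a_{i_{r+1}, j_r} is well defined (independent of the chosen path), is a completion of A, and satisfies σ₋(C) = 0. -/

import Mathlib

/-- The balanced collapsing sum of an `(m+1) × (n+1)` matrix. -/
def bcs {G : Type*} [AddCommGroup G] {m n : ℕ}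
    (A : Matrix (Fin (m + 1)) (Fin (n + 1)) G) : Matrix (Fin m) (Fin n) G :=
  fun i j => A i.castSucc j.castSucc - A i.succ j.castSucc
    - A i.castSucc j.succ + A i.succ j.succ

/-- `C` is a completion of the partial matrix `A` (blank entries are `none`). -/
def IsCompletion {G : Type*} {m n : ℕ} (A : Matrix (Fin m) (Fin n) (Option G))
    (C : Matrix (Fin m) (Fin n) G) : Prop :=
  ∀ i j, A i j ≠ none → A i j = some (C i j)

/-- The bipartite graph `H_A` of a partial matrix `A`, on the vertex set
`{x_1, …, x_m} ⊕ {y_1, …, y_n}`, with an edge `(x_i, y_j)` whenever `a_{i,j} ≠ ∗`. -/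
def HGraph {G : Type*} {m n : ℕ} (A : Matrix (Fin m) (Fin n) (Option G)) :
    SimpleGraph (Fin m ⊕ Fin n) :=
  SimpleGraph.fromRel (fun u v =>
    ∃ i j, u = Sum.inl i ∧ v = Sum.inr j ∧ A i j ≠ none)

/-- `(i, j)` describes a path `(x_s = x_{i 0}, y_{j 0}, x_{i 1}, y_{j 1}, …, x_{i k},
y_{j k} = y_t)` in `H_A` from the row vertex `s` to the column vertex `t`: all edges
lie in `H_A` and no vertex is repeated. -/
def IsPathIn {G : Type*} {m n : ℕ} (A : Matrix (Fin m) (Fin n) (Option G))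
    (s : Fin m) (t : Fin n)
    {k : ℕ} (i : Fin (k + 1) → Fin m) (j : Fin (k + 1) → Fin n) : Prop :=
  i 0 = s ∧ j (Fin.last k) = t ∧
  Function.Injective i ∧ Function.Injective j ∧
  (∀ r, A (i r) (j r) ≠ none) ∧
  (∀ r : Fin k, A (i r.succ) (j r.castSucc) ≠ none)

/-- The value `Σ_{r=1}^{k} a_{i_r, j_r} − Σ_{r=1}^{k−1} a_{i_{r+1}, j_r}` associated to a
path `(i, j)`. -/
def pathValue {G : Type*} [AddCommGroup G] {m n : ℕ}
    (A : Matrix (Fin m) (Fin n) (Option G))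
    {k : ℕ} (i : Fin (k + 1) → Fin m) (j : Fin (k + 1) → Fin n) : G :=
  ∑ r : Fin (k + 1), (A (i r) (j r)).getD 0
    - ∑ r : Fin k, (A (i r.succ) (j r.castSucc)).getD 0

/-- `(i, j)` describes a cycle in the partial matrix `A`: writing the index sequence
`(i 0, j 0, i 1, j 1, …, i k, j k, i 0)` (addition of indices is modulo `k + 1`),
the corresponding closed walk in the bipartite graph `H_A` uses only edges of `H_A`
and does not repeat edges. -/
def IsCycleIn {G : Type*} {m n : ℕ} (A : Matrix (Fin m) (Fin n) (Option G))
    {k : ℕ} (i : Fin (k + 1) → Fin m) (j : Fin (k + 1) → Fin n) : Prop :=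
  (∀ r, A (i r) (j r) ≠ none) ∧
  (∀ r, A (i (r + 1)) (j r) ≠ none) ∧
  Function.Injective (fun p : Fin (k + 1) × Bool =>
    if p.2 then (i p.1, j p.1) else (i (p.1 + 1), j p.1))

/-- The cycle `(i, j)` in `A` is balanced: `Σ_r (a_{i_r, j_r} − a_{i_{r+1}, j_r}) = 0`. -/
def IsBalancedCycle {G : Type*} [AddCommGroup G] {m n : ℕ}
    (A : Matrix (Fin m) (Fin n) (Option G))
    {k : ℕ} (i : Fin (k + 1) → Fin m) (j : Fin (k + 1) → Fin n) : Prop :=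
  ∑ r : Fin (k + 1), ((A (i r) (j r)).getD 0 - (A (i (r + 1)) (j r)).getD 0) = 0

/-- A partial matrix is cycle-balanced if every cycle in it is balanced. -/
def CycleBalanced {G : Type*} [AddCommGroup G] {m n : ℕ}
    (A : Matrix (Fin m) (Fin n) (Option G)) : Prop :=
  ∀ (k : ℕ) (i : Fin (k + 1) → Fin m) (j : Fin (k + 1) → Fin n),
    IsCycleIn A i j → IsBalancedCycle A i j

namespace Stmt17
open SimpleGraph List

set_option linter.unusedSectionVars false
variable {G : Type*} [AddCommGroup G] {m n : ℕ} (A : Matrix (Fin m) (Fin n) (Option G))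

def wt : Fin m ⊕ Fin n → Fin m ⊕ Fin n → G
  | Sum.inl i, Sum.inr j => (A i j).getD 0
  | Sum.inr j, Sum.inl i => -(A i j).getD 0
  | _, _ => 0

lemma wt_symm (u v : Fin m ⊕ Fin n) : wt A v u = - wt A u v := by
  cases u <;> cases v <;> simp [wt]

def wsum : ∀ {u v : Fin m ⊕ Fin n}, (HGraph A).Walk u v → G
  | _, _, .nil => 0
  | u, _, .cons (v := v) _ p => wt A u v + wsum p

@[simp] lemma wsum_nil {u : Fin m ⊕ Fin n} : wsum A (.nil : (HGraph A).Walk u u) = 0 := rfl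

@[simp] lemma wsum_cons {u v w : Fin m ⊕ Fin n} (h : (HGraph A).Adj u v)
    (p : (HGraph A).Walk v w) : wsum A (.cons h p) = wt A u v + wsum A p := rfl

@[simp] lemma wsum_append {u v w : Fin m ⊕ Fin n} (p : (HGraph A).Walk u v)
    (q : (HGraph A).Walk v w) : wsum A (p.append q) = wsum A p + wsum A q := by
  induction p with
  | nil => simp
  | cons h p ih => simp [ih, add_assoc]

@[simp] lemma wsum_reverse {u v : Fin m ⊕ Fin n} (p : (HGraph A).Walk u v) :
    wsum A p.reverse = - wsum A p := by
  induction p with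
  | nil => simp
  | cons h p ih =>
    rw [SimpleGraph.Walk.reverse_cons, wsum_append, ih, wsum_cons, wsum_nil, wt_symm, wsum_cons]
    abel

lemma adj_mk {a : Fin m} {b : Fin n} (h : A a b ≠ none) :
    (HGraph A).Adj (Sum.inl a) (Sum.inr b) := by
  rw [HGraph, SimpleGraph.fromRel_adj]
  exact ⟨by simp, Or.inl ⟨a, b, rfl, rfl, h⟩⟩

lemma adj_inl {a : Fin m} {v : Fin m ⊕ Fin n} (h : (HGraph A).Adj (Sum.inl a) v) :
    ∃ b, v = Sum.inr b ∧ A a b ≠ none := by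
  rw [HGraph, SimpleGraph.fromRel_adj] at h
  obtain ⟨-, h | h⟩ := h <;> obtain ⟨i, j, h1, h2, h3⟩ := h
  · obtain rfl : a = i := by simpa using h1
    exact ⟨j, h2, h3⟩
  · exact absurd h2 (by simp)

lemma adj_inr {b : Fin n} {v : Fin m ⊕ Fin n} (h : (HGraph A).Adj (Sum.inr b) v) :
    ∃ a, v = Sum.inl a ∧ A a b ≠ none := by
  rw [HGraph, SimpleGraph.fromRel_adj] at h
  obtain ⟨-, h | h⟩ := h <;> obtain ⟨i, j, h1, h2, h3⟩ := h
  · exact absurd h1 (by simp)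
  · obtain rfl : b = j := by simpa using h2
    exact ⟨i, h1, h3⟩

/-! ### Spine lists -/

def altA : List (Fin m × Fin n) → List (Fin m ⊕ Fin n)
  | [] => []
  | x :: l => Sum.inl x.1 :: Sum.inr x.2 :: altA l

@[simp] lemma altA_nil : altA ([] : List (Fin m × Fin n)) = [] := rfl
@[simp] lemma altA_cons (x : Fin m × Fin n) (l) :
    altA (x :: l) = Sum.inl x.1 :: Sum.inr x.2 :: altA l := rfl

@[simp] lemma length_altA (l : List (Fin m × Fin n)) : (altA l).length = 2 * l.length := by
  induction l with
  | nil => rfl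
  | cons x l ih => simp [ih]; ring

@[simp] lemma mem_altA_inl (a : Fin m) (l : List (Fin m × Fin n)) :
    Sum.inl a ∈ altA l ↔ a ∈ l.map Prod.fst := by
  induction l with
  | nil => simp
  | cons x l ih => simp [ih]

@[simp] lemma mem_altA_inr (b : Fin n) (l : List (Fin m × Fin n)) :
    Sum.inr b ∈ altA l ↔ b ∈ l.map Prod.snd := by
  induction l with
  | nil => simp
  | cons x l ih => simp [ih]

lemma nodup_of_altA {l : List (Fin m × Fin n)} (h : (altA l).Nodup) :
    (l.map Prod.fst).Nodup ∧ (l.map Prod.snd).Nodup := by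
  induction l with
  | nil => simp
  | cons x l ih =>
    simp only [altA_cons, List.nodup_cons, List.mem_cons, List.map_cons] at h ⊢
    refine ⟨⟨?_, (ih h.2.2).1⟩, ⟨?_, (ih h.2.2).2⟩⟩
    · intro hx; exact h.1 (Or.inr ((mem_altA_inl _ _).2 hx))
    · intro hx; exact h.2.1 ((mem_altA_inr _ _).2 hx)

def Ok (l : List (Fin m × Fin n)) : Prop :=
  (∀ x ∈ l, A x.1 x.2 ≠ none) ∧ l.Chain' (fun x y => A y.1 x.2 ≠ none)

def val2 : Fin n → List (Fin m × Fin n) → G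
  | _, [] => 0
  | b, x :: r => -(A x.1 b).getD 0 + (A x.1 x.2).getD 0 + val2 x.2 r

def val : List (Fin m × Fin n) → G
  | [] => 0
  | x :: r => (A x.1 x.2).getD 0 + val2 A x.2 r

lemma val2_eq (b : Fin n) (x : Fin m × Fin n) (r : List (Fin m × Fin n)) :
    val2 A b (x :: r) = -(A x.1 b).getD 0 + val A (x :: r) := by
  simp [val2, val]; abel

lemma spine_aux {t : Fin n} : ∀ {w w' : Fin m ⊕ Fin n} (p : (HGraph A).Walk w w'), w' = Sum.inr t →
    (∀ s : Fin m, w = Sum.inl s → ∃ (l : List (Fin m × Fin n)) (h : l ≠ []),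
      (l.head h).1 = s ∧ (l.getLast h).2 = t ∧ p.support = altA l ∧ Ok A l ∧
      wsum A p = val A l) ∧
    (∀ b : Fin n, w = Sum.inr b → ∃ l : List (Fin m × Fin n),
      p.support = Sum.inr b :: altA l ∧ Ok A l ∧
      (∀ h : l ≠ [], (l.getLast h).2 = t ∧ A (l.head h).1 b ≠ none) ∧
      (l = [] → b = t) ∧ wsum A p = val2 A b l) := by
  intro w w' p hw'
  induction p with
  | nil =>
    subst hw'
    constructor
    · rintro s ⟨⟩
    · rintro b hb
      obtain rfl : b = t := by simpa using hb.symm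
      exact ⟨[], by simp, ⟨by simp, List.isChain_nil⟩, by simp, fun _ => rfl, by simp [val2]⟩
  | @cons w v w' e q ih =>
    subst hw'
    replace ih := ih rfl
    constructor
    · rintro s rfl
      obtain ⟨b, rfl, hab⟩ := adj_inl A e
      obtain ⟨l, hsup, hok, hlast, hnilbt, hval⟩ := ih.2 b rfl
      refine ⟨(s, b) :: l, by simp, rfl, ?_, ?_, ?_, ?_⟩
      · cases l with
        | nil => simpa using hnilbt rfl
        | cons y r => simpa using (hlast (by simp)).1
      · simp [hsup]
      · constructor
        · rintro x hx
          rcases List.mem_cons.1 hx with rfl | hx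
          · exact hab
          · exact hok.1 x hx
        · cases l with
          | nil => exact List.isChain_singleton _
          | cons y r =>
            exact List.isChain_cons_cons.2 ⟨(hlast (by simp)).2, hok.2⟩
      · simp [wsum_cons, hval, wt, val]
    · rintro b rfl
      obtain ⟨a, rfl, hab⟩ := adj_inr A e
      obtain ⟨l, hne, hhead, hlast, hsup, hok, hval⟩ := ih.1 a rfl
      refine ⟨l, by simp [hsup], hok, fun _ => ⟨hlast, hhead ▸ hab⟩, fun h => absurd h hne, ?_⟩
      · cases l with
        | nil => exact absurd rfl hne
        | cons y r =>
          have h1 : y.1 = a := hhead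
          rw [wsum_cons, hval, val2_eq]
          simp only [val, wt, h1]

lemma pathValue_zero (i : Fin 1 → Fin m) (j : Fin 1 → Fin n) :
    pathValue A i j = (A (i 0) (j 0)).getD 0 := by
  simp [pathValue]

lemma pathValue_succ {k : ℕ} (i : Fin (k + 2) → Fin m) (j : Fin (k + 2) → Fin n) :
    pathValue A i j = (A (i 0) (j 0)).getD 0 - (A (i 1) (j 0)).getD 0
      + pathValue A (i ∘ Fin.succ) (j ∘ Fin.succ) := by
  simp only [pathValue, Fin.sum_univ_succ, Function.comp_apply]
  have h1 : ∀ r : Fin k, (r.succ).castSucc = (r.castSucc).succ := by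
    intro r; exact Fin.ext rfl
  simp only [h1, Fin.castSucc_zero, Fin.succ_zero_eq_one]
  abel

lemma val_ofFn : ∀ (k : ℕ) (i : Fin (k + 1) → Fin m) (j : Fin (k + 1) → Fin n),
    val A (List.ofFn fun r => (i r, j r)) = pathValue A i j
  | 0, i, j => by
    simp [val, val2, pathValue_zero, List.ofFn_succ]
  | (k+1), i, j => by
    have ih := val_ofFn k (i ∘ Fin.succ) (j ∘ Fin.succ)
    simp only [Function.comp_apply] at ih
    rw [pathValue_succ, List.ofFn_succ]
    simp only [val]
    rw [List.ofFn_succ, val2_eq,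
      ← List.ofFn_succ (f := fun r : Fin (k+1) => (i r.succ, j r.succ)), ih]
    simp only [Function.comp_apply, Fin.succ_zero_eq_one]
    abel

lemma cycleSum_eq {k : ℕ} (i : Fin (k + 1) → Fin m) (j : Fin (k + 1) → Fin n) :
    ∑ r : Fin (k + 1), ((A (i r) (j r)).getD 0 - (A (i (r + 1)) (j r)).getD 0)
      = pathValue A i j - (A (i 0) (j (Fin.last k))).getD 0 := by
  rw [Finset.sum_sub_distrib, pathValue]
  have : ∑ r : Fin (k + 1), (A (i (r + 1)) (j r)).getD 0
      = ∑ r : Fin k, (A (i r.succ) (j r.castSucc)).getD 0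
        + (A (i 0) (j (Fin.last k))).getD 0 := by
    rw [Fin.sum_univ_castSucc]
    simp [Fin.coeSucc_eq_succ, Fin.last_add_one]
  rw [this]
  abel

lemma bridge (l : List (Fin m × Fin n)) (hl : l ≠ []) :
    ∃ (k : ℕ) (i : Fin (k + 1) → Fin m) (j : Fin (k + 1) → Fin n),
      (List.ofFn fun r => (i r, j r)) = l ∧
      i 0 = (l.head hl).1 ∧ j (Fin.last k) = (l.getLast hl).2 ∧
      ((altA l).Nodup → Function.Injective i ∧ Function.Injective j) ∧
      (Ok A l → (∀ r, A (i r) (j r) ≠ none) ∧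
        (∀ r : Fin k, A (i r.succ) (j r.castSucc) ≠ none)) := by
  obtain ⟨k, hlen⟩ : ∃ k, l.length = k + 1 :=
    ⟨l.length - 1, (Nat.succ_pred_eq_of_pos (List.length_pos_iff_ne_nil.2 hl)).symm⟩
  refine ⟨k, fun r => (l.get (Fin.cast hlen.symm r)).1, fun r => (l.get (Fin.cast hlen.symm r)).2,
    ?_, ?_, ?_, ?_, ?_⟩
  · apply List.ext_getElem (by simp [hlen])
    intro r h1 h2
    cases r with
    | zero => simp
    | succ r => simp
  · rw [List.head_eq_getElem_zero]
    rfl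
  · rw [List.getLast_eq_getElem]
    simp [List.get_eq_getElem, hlen]
  · intro hnd
    obtain ⟨h1, h2⟩ := nodup_of_altA hnd
    constructor
    · intro r r' hrr'
      have := List.Nodup.get_inj_iff h1 (i := Fin.cast (by simp [hlen]) r)
        (j := Fin.cast (by simp [hlen]) r')
      simp only [List.get_eq_getElem, List.getElem_map] at this
      have h3 := this.1 (by simpa using hrr')
      simpa [Fin.ext_iff] using h3
    · intro r r' hrr'
      have := List.Nodup.get_inj_iff h2 (i := Fin.cast (by simp [hlen]) r)
        (j := Fin.cast (by simp [hlen]) r')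
      simp only [List.get_eq_getElem, List.getElem_map] at this
      have h3 := this.1 (by simpa using hrr')
      simpa [Fin.ext_iff] using h3
  · intro hok
    refine ⟨fun r => hok.1 _ (l.get_mem _), fun r => ?_⟩
    have := (List.isChain_iff_getElem.1 hok.2) r (by rw [hlen]; exact Nat.succ_lt_succ r.isLt)
    exact this

lemma walk_of_data : ∀ (k : ℕ) (i : Fin (k + 1) → Fin m) (j : Fin (k + 1) → Fin n),
    (∀ r, A (i r) (j r) ≠ none) → (∀ r : Fin k, A (i r.succ) (j r.castSucc) ≠ none) →
    ∃ p : (HGraph A).Walk (Sum.inl (i 0)) (Sum.inr (j (Fin.last k))),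
      wsum A p = pathValue A i j
  | 0, i, j, h1, h2 => by
    refine ⟨.cons (adj_mk A (h1 0)) .nil, ?_⟩
    simp [pathValue_zero, wt]
  | (k+1), i, j, h1, h2 => by
    obtain ⟨p', hp'⟩ := walk_of_data k (i ∘ Fin.succ) (j ∘ Fin.succ)
      (fun r => h1 r.succ) (fun r => by
        have := h2 r.succ
        exact this)
    rw [← Fin.succ_last]
    have adj1 : (HGraph A).Adj (Sum.inl (i 0)) (Sum.inr (j 0)) := adj_mk A (h1 0)
    have adj2 : (HGraph A).Adj (Sum.inr (j 0)) (Sum.inl (i 1)) := by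
      have := h2 0
      simp only [Fin.castSucc_zero, Fin.succ_zero_eq_one] at this
      exact (adj_mk A this).symm
    refine ⟨.cons adj1 (.cons adj2 p'), ?_⟩
    show wt A _ _ + (wt A _ _ + wsum A p') = _
    rw [hp', pathValue_succ]
    simp only [wt]
    abel

lemma wsum_cycle_inl (hbal : CycleBalanced A) {s : Fin m}
    (c : (HGraph A).Walk (Sum.inl s) (Sum.inl s)) (h3 : 3 ≤ c.length)
    (hnd : c.support.tail.Nodup) : wsum A c = 0 := by
  cases c with
  | nil => simp
  | @cons _ v _ e r =>
    obtain ⟨b, rfl, hab⟩ := adj_inl A e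
    obtain ⟨l, hne', hhead, hlast, hsup, hok, hval⟩ :=
      (spine_aux A r.reverse rfl).1 s rfl
    obtain ⟨k, i, j, hofn, hi0, hjl, hinj, hcond⟩ := bridge A l hne'
    have hlenl : l.length = k + 1 := by
      have := congrArg List.length hofn
      simpa using this.symm
    -- length facts
    have hrlen : r.length + 1 = 2 * l.length := by
      have h1 : r.reverse.support.length = r.reverse.length + 1 := by
        simp [SimpleGraph.Walk.length_support]
      rw [hsup] at h1
      simp at h1
      omega
    have hk1 : 1 ≤ k := by
      simp only [SimpleGraph.Walk.length_cons] at h3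
      omega
    -- nodup
    have hndl : (altA l).Nodup := by
      rw [← hsup, SimpleGraph.Walk.support_reverse, List.nodup_reverse]
      simpa using hnd
    obtain ⟨hiinj, hjinj⟩ := hinj hndl
    obtain ⟨hc1, hc2⟩ := hcond hok
    -- the cycle conditions
    have hcyc : IsCycleIn A i j := by
      refine ⟨hc1, ?_, ?_⟩
      · intro r0
        induction r0 using Fin.lastCases with
        | last =>
          rw [Fin.last_add_one, hi0, hhead, hjl, hlast]
          exact hab
        | cast r1 =>
          rw [Fin.coeSucc_eq_succ]
          exact hc2 r1
      · rintro ⟨p, bp⟩ ⟨q, bq⟩ hpq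
        simp only at hpq
        have hone : (p : Fin (k+1)) ≠ p + 1 := by
          intro hcon
          have h01 : (0 : Fin (k+1)) = 1 :=
            add_left_cancel (a := p) (by rw [add_zero]; exact hcon)
          have h02 := congrArg Fin.val h01
          rw [Fin.val_zero, Fin.val_one'] at h02
          rw [Nat.mod_eq_of_lt (by omega : 1 < k + 1)] at h02
          exact absurd h02.symm one_ne_zero
        cases bp <;> cases bq <;>
          simp only [Bool.false_eq_true, if_true, if_false, Prod.mk.injEq] at hpq <;>
          obtain ⟨hpq1, hpq2⟩ := hpq <;> obtain rfl : p = q := hjinj hpq2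
        · rfl
        · exact absurd (hiinj hpq1).symm hone
        · exact absurd (hiinj hpq1) hone
        · rfl
    have hbalc := hbal k i j hcyc
    rw [IsBalancedCycle, cycleSum_eq] at hbalc
    have hpv : pathValue A i j = (A (i 0) (j (Fin.last k))).getD 0 := by
      have := sub_eq_zero.1 hbalc
      exact this
    have hvl : val A l = pathValue A i j := by
      rw [← hofn, val_ofFn]
    rw [wsum_cons]
    have : wsum A r = - val A l := by
      rw [← hval, wsum_reverse, neg_neg]
    rw [this, hvl, hpv, hi0, hhead, hjl, hlast]
    simp [wt]

lemma wsum_cycle (hbal : CycleBalanced A) {u : Fin m ⊕ Fin n}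
    (c : (HGraph A).Walk u u) (h3 : 3 ≤ c.length)
    (hnd : c.support.tail.Nodup) : wsum A c = 0 := by
  cases u with
  | inl s => exact wsum_cycle_inl A hbal c h3 hnd
  | inr t =>
    cases c with
    | nil => simp
    | @cons _ v _ e r =>
      obtain ⟨a, rfl, hab⟩ := adj_inr A e
      -- rotate: c' := r.append (cons e nil)
      set c' : (HGraph A).Walk (Sum.inl a) (Sum.inl a) :=
        r.append (SimpleGraph.Walk.cons e .nil) with hc'
      have hlen : c'.length = (SimpleGraph.Walk.cons e r).length := by
        simp [hc']
      have hsup' : c'.support = r.support ++ [Sum.inl a] := by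
        rw [hc', SimpleGraph.Walk.support_append]
        rfl
      have hndr : r.support.Nodup := by simpa using hnd
      have hnd' : c'.support.tail.Nodup := by
        rw [hsup']
        have h0 : r.support = Sum.inl a :: r.support.tail :=
          (SimpleGraph.Walk.support_eq_cons r).symm ▸ rfl
        rw [h0]
        simp only [List.cons_append, List.tail_cons]
        rw [List.nodup_append]
        refine ⟨(h0 ▸ hndr : (Sum.inl a :: r.support.tail).Nodup).of_cons, by simp, ?_⟩
        intro x hx
        simp only [List.mem_singleton]
        rintro _ rfl hxa
        subst hxa
        exact ((h0 ▸ hndr : (Sum.inl a :: r.support.tail).Nodup).notMem) hx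
      have h0 := wsum_cycle_inl A hbal c' (by omega) hnd'
      rw [hc', wsum_append, wsum_cons, wsum_nil] at h0
      rw [wsum_cons]
      abel_nf at h0 ⊢
      exact h0

lemma wsum_closed (hbal : CycleBalanced A) :
    ∀ (L : ℕ) {u : Fin m ⊕ Fin n} (c : (HGraph A).Walk u u), c.length = L → wsum A c = 0 := by
  intro L
  induction L using Nat.strong_induction_on with
  | _ L ih =>
    intro u c hL
    by_cases hnd : c.support.tail.Nodup
    · -- small cases or a genuine cycle
      match c, hL with
      | .nil, _ => simp
      | .cons e .nil, hL => exact absurd rfl e.ne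
      | @SimpleGraph.Walk.cons _ _ _ v _ e (.cons e2 .nil), hL =>
        rw [wsum_cons, wsum_cons, wsum_nil, wt_symm A u v]
        abel
      | .cons e (.cons e2 (.cons e3 r)), hL =>
        exact wsum_cycle A hbal _ (by simp) hnd
    · -- find a repeated vertex and split
      cases c with
      | nil => exact absurd (by simp) hnd
      | @cons _ y _ e d0 =>
        rw [SimpleGraph.Walk.support_cons, List.tail_cons] at hnd
        obtain ⟨x, hxdup⟩ := List.exists_duplicate_iff_not_nodup.2 hnd
        have hcount := List.duplicate_iff_two_le_count.1 hxdup
        have hx : x ∈ d0.support := hxdup.mem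
        have hcnt1 := d0.count_support_takeUntil_eq_one hx
        -- abstract the two pieces
        have hspec := d0.take_spec hx
        set t1 := d0.takeUntil x hx with ht1
        set q2 := d0.dropUntil x hx with hq2
        clear_value t1 q2
        have hsupp : d0.support = t1.support ++ q2.support.tail := by
          conv_lhs => rw [← hspec]
          rw [SimpleGraph.Walk.support_append]
        have hx2' : x ∈ q2.support.tail := by
          have h8 := hcount
          rw [hsupp, @List.count_append _ instBEqOfDecidableEq, hcnt1] at h8
          by_contra hnot
          have := @List.count_eq_zero_of_not_mem _ instBEqOfDecidableEq _ _ _ hnot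
          omega
        have hLsum : d0.length = t1.length + q2.length := by
          conv_lhs => rw [← hspec]
          rw [SimpleGraph.Walk.length_append]
        have hs0 : wsum A d0 = wsum A t1 + wsum A q2 := by
          conv_lhs => rw [← hspec]
          rw [wsum_append]
        clear hq2 ht1 hspec hsupp hcnt1 hcount hxdup hnd hx
        cases q2 with
        | nil => simp at hx2'
        | @cons _ y2 _ e2 d2 =>
          rw [SimpleGraph.Walk.support_cons, List.tail_cons] at hx2'
          have hspec2 := d2.take_spec hx2'
          set t2 := d2.takeUntil x hx2' with ht2
          set rest := d2.dropUntil x hx2' with hrest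
          clear_value t2 rest
          set mid : (HGraph A).Walk x x := SimpleGraph.Walk.cons e2 t2 with hmid
          set out : (HGraph A).Walk u u := (SimpleGraph.Walk.cons e t1).append rest with hout
          have hL2 : d2.length = t2.length + rest.length := by
            conv_lhs => rw [← hspec2]
            rw [SimpleGraph.Walk.length_append]
          have hs2 : wsum A d2 = wsum A t2 + wsum A rest := by
            conv_lhs => rw [← hspec2]
            rw [wsum_append]
          have hmidlen : mid.length = t2.length + 1 := by simp [hmid]
          have houtlen : out.length = 1 + t1.length + rest.length := by
            simp [hout]
            omega
          simp only [SimpleGraph.Walk.length_cons] at hLsum hL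
          have h1 := ih out.length (by omega) out rfl
          have h2 := ih mid.length (by omega) mid rfl
          rw [wsum_cons, hs0, wsum_cons, hs2]
          rw [hout, wsum_append, wsum_cons] at h1
          rw [hmid, wsum_cons] at h2
          have heq : wt A u y + (wsum A t1 + (wt A x y2 + (wsum A t2 + wsum A rest)))
              = wt A u y + wsum A t1 + wsum A rest + (wt A x y2 + wsum A t2) := by abel
          rw [heq, h1, h2, add_zero]

lemma wsum_copy {u v u' v' : Fin m ⊕ Fin n} (p : (HGraph A).Walk u v)
    (hu : u = u') (hv : v = v') : wsum A (p.copy hu hv) = wsum A p := by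
  subst hu hv
  rfl

lemma wsum_eq (hbal : CycleBalanced A) {u v : Fin m ⊕ Fin n}
    (p q : (HGraph A).Walk u v) : wsum A p = wsum A q := by
  have h := wsum_closed A hbal (p.append q.reverse).length (p.append q.reverse) rfl
  rw [wsum_append, wsum_reverse] at h
  have := sub_eq_zero.1 (by rwa [← sub_eq_add_neg] at h)
  exact this

lemma exists_pathIn (hconn : (HGraph A).Connected) (s : Fin m) (t : Fin n) :
    ∃ (k : ℕ) (i : Fin (k + 1) → Fin m) (j : Fin (k + 1) → Fin n), IsPathIn A s t i j := by
  obtain ⟨w⟩ := hconn.preconnected (Sum.inl s) (Sum.inr t)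
  have hp : w.bypass.IsPath := SimpleGraph.Walk.bypass_isPath w
  obtain ⟨l, hne, hhead, hlast, hsup, hok, -⟩ := (spine_aux A w.bypass rfl).1 s rfl
  obtain ⟨k, i, j, -, hi0, hjl, hinj, hcond⟩ := bridge A l hne
  have hnd : (altA l).Nodup := by
    rw [← hsup]
    exact hp.support_nodup
  obtain ⟨hiinj, hjinj⟩ := hinj hnd
  obtain ⟨hc1, hc2⟩ := hcond hok
  exact ⟨k, i, j, hi0.trans hhead, hjl.trans hlast, hiinj, hjinj, hc1, hc2⟩

lemma pathValue_eq (hbal : CycleBalanced A) (s : Fin m) (t : Fin n) (k k' : ℕ)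
    (i : Fin (k + 1) → Fin m) (j : Fin (k + 1) → Fin n)
    (i' : Fin (k' + 1) → Fin m) (j' : Fin (k' + 1) → Fin n)
    (h : IsPathIn A s t i j) (h' : IsPathIn A s t i' j') :
    pathValue A i j = pathValue A i' j' := by
  obtain ⟨p, hp⟩ := walk_of_data A k i j h.2.2.2.2.1 h.2.2.2.2.2
  obtain ⟨p', hp'⟩ := walk_of_data A k' i' j' h'.2.2.2.2.1 h'.2.2.2.2.2
  have e1 : Sum.inl (i' 0) = (Sum.inl (i 0) : Fin m ⊕ Fin n) := by rw [h.1, h'.1]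
  have e2 : Sum.inr (j' (Fin.last k')) = (Sum.inr (j (Fin.last k)) : Fin m ⊕ Fin n) := by
    rw [h.2.1, h'.2.1]
  rw [← hp, ← hp', ← wsum_copy A p' e1 e2]
  exact wsum_eq A hbal _ _

/-- The potential function, given a base vertex. -/
noncomputable def pot (hconn : (HGraph A).Connected) (base v : Fin m ⊕ Fin n) : G :=
  wsum A (hconn.preconnected base v).some

lemma wsum_eq_pot (hbal : CycleBalanced A) (hconn : (HGraph A).Connected)
    (base : Fin m ⊕ Fin n) {s : Fin m} {t : Fin n}
    (q : (HGraph A).Walk (Sum.inl s) (Sum.inr t)) :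
    wsum A q = pot A hconn base (Sum.inr t) - pot A hconn base (Sum.inl s) := by
  have h1 : pot A hconn base (Sum.inr t)
      = wsum A (((hconn.preconnected base (Sum.inl s)).some).append q) :=
    wsum_eq A hbal _ _
  rw [wsum_append] at h1
  rw [h1, pot]
  abel

end Stmt17

theorem stmt17 {G : Type*} [AddCommGroup G] {m n : ℕ}
    (hm : 1 ≤ m) (hn : 1 ≤ n)
    (A : Matrix (Fin (m + 1)) (Fin (n + 1)) (Option G))
    (hconn : (HGraph A).Connected) (hbal : CycleBalanced A) :
    (∀ (s : Fin (m + 1)) (t : Fin (n + 1)),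
        ∃ (k : ℕ) (i : Fin (k + 1) → Fin (m + 1)) (j : Fin (k + 1) → Fin (n + 1)),
          IsPathIn A s t i j) ∧
    (∀ (s : Fin (m + 1)) (t : Fin (n + 1)) (k k' : ℕ)
        (i : Fin (k + 1) → Fin (m + 1)) (j : Fin (k + 1) → Fin (n + 1))
        (i' : Fin (k' + 1) → Fin (m + 1)) (j' : Fin (k' + 1) → Fin (n + 1)),
        IsPathIn A s t i j → IsPathIn A s t i' j' →
          pathValue A i j = pathValue A i' j') ∧
    (∀ C : Matrix (Fin (m + 1)) (Fin (n + 1)) G,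
        (∀ (s : Fin (m + 1)) (t : Fin (n + 1)),
          ∃ (k : ℕ) (i : Fin (k + 1) → Fin (m + 1)) (j : Fin (k + 1) → Fin (n + 1)),
            IsPathIn A s t i j ∧ C s t = pathValue A i j) →
        IsCompletion A C ∧ bcs C = 0) := by
  refine ⟨fun s t => Stmt17.exists_pathIn A hconn s t,
    fun s t k k' i j i' j' h h' => Stmt17.pathValue_eq A hbal s t k k' i j i' j' h h', ?_⟩
  intro C hC
  set base : Fin (m + 1) ⊕ Fin (n + 1) := Sum.inl 0 with hbase
  have hCst : ∀ s t, C s t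
      = Stmt17.pot A hconn base (Sum.inr t) - Stmt17.pot A hconn base (Sum.inl s) := by
    intro s t
    obtain ⟨k, i, j, hpath, hval⟩ := hC s t
    obtain ⟨p, hp⟩ := Stmt17.walk_of_data A k i j hpath.2.2.2.2.1 hpath.2.2.2.2.2
    have e1 : Sum.inl (i 0) = (Sum.inl s : Fin (m+1) ⊕ Fin (n+1)) := by rw [hpath.1]
    have e2 : Sum.inr (j (Fin.last k)) = (Sum.inr t : Fin (m+1) ⊕ Fin (n+1)) := by
      rw [hpath.2.1]
    rw [hval, ← hp, ← Stmt17.wsum_copy A p e1 e2]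
    exact Stmt17.wsum_eq_pot A hbal hconn base _
  constructor
  · intro s t hst
    obtain ⟨g, hg⟩ := Option.ne_none_iff_exists'.1 hst
    have hq0 := Stmt17.wsum_eq_pot A hbal hconn base
      (SimpleGraph.Walk.cons (Stmt17.adj_mk A hst) .nil)
    rw [Stmt17.wsum_cons, Stmt17.wsum_nil] at hq0
    rw [hg]
    congr 1
    rw [hCst s t, ← hq0]
    simp [Stmt17.wt, hg]
  · funext a b
    simp only [bcs, hCst, Matrix.zero_apply]
    abel
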